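/- Let z₀ ∈ (0,1) and s ∈ (0, 1 − z₀). Then the Euclidean disk B²(z₀, s) = {z ∈ ℂ : |z − z₀| < s} is contained in the Hilbert disk B_h(z₀, ρ(z₀, z₀ + s)), where ρ is the hyperbolic metric and h is the Hilbert metric of the unit disk. -/

import Mathlib

set_option maxHeartbeats 1000000


open Complex ComplexConjugate

/-- The line through two points `a`, `b` in the complex plane. -/
noncomputable def lineThrough (a b : ℂ) : Set ℂ :=
  {z : ℂ | ∃ t : ℝ, z = a + (t : ℂ) * (b - a)}

/-- The Hilbert metric of the unit disk: for `a ≠ b`,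
`h(a,b) = log (|u-b||a-v| / (|u-a||b-v|))` where `u, v` are the intersection
points of the line through `a, b` with the unit circle, ordered so that
`|u-a| < |u-b|` (equivalently `|v-b| < |v-a|`). For `a = b` the defining set
is empty and `sSup ∅ = 0`. -/
noncomputable def hilbertDist (a b : ℂ) : ℝ :=
  sSup { d : ℝ | ∃ u v : ℂ, ‖u‖ = 1 ∧ ‖v‖ = 1 ∧
    u ∈ lineThrough a b ∧ v ∈ lineThrough a b ∧
    dist u a < dist u b ∧ dist v b < dist v a ∧
    d = Real.log ((dist u b * dist a v) / (dist u a * dist b v)) }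

/-- The hyperbolic (Poincaré) metric of the unit disk, defined by
`sinh (ρ(a,b)/2) = |a-b| / √((1-|a|²)(1-|b|²))`. -/
noncomputable def rhoDist (a b : ℂ) : ℝ :=
  2 * Real.arsinh (‖a - b‖ /
    Real.sqrt ((1 - ‖a‖ ^ 2) * (1 - ‖b‖ ^ 2)))

/-- The visual angle metric of the unit disk:
`v(a,b) = sup {∠(a,z,b) : z ∈ ∂𝔹²}`. -/
noncomputable def visualAngle (a b : ℂ) : ℝ :=
  sSup { α : ℝ | ∃ z : ℂ, ‖z‖ = 1 ∧ α = EuclideanGeometry.angle a z b }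

/-- Euclidean distance from the origin to the line through `a` and `b`. -/
noncomputable def distToLine (a b : ℂ) : ℝ := Metric.infDist 0 (lineThrough a b)

/-- The Hilbert disk `B_h(z₀, t)`. -/
noncomputable def hilbertBall (z₀ : ℂ) (t : ℝ) : Set ℂ :=
  {z : ℂ | ‖z‖ < 1 ∧ hilbertDist z₀ z < t}

/-- The hyperbolic disk `B_ρ(z₀, t)`. -/
noncomputable def rhoBall (z₀ : ℂ) (t : ℝ) : Set ℂ :=
  {z : ℂ | ‖z‖ < 1 ∧ rhoDist z₀ z < t}

/-- The Hilbert metric is dominated by the hyperbolic metric on the unit disk. -/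
private lemma hilbert_le_rho (a b : ℂ) (ha : ‖a‖ < 1) (hb : ‖b‖ < 1) :
    hilbertDist a b ≤ rhoDist a b := by
  have hA : 0 < 1 - Complex.normSq a := by
    have h := Complex.sq_norm a
    nlinarith [norm_nonneg a]
  have hB : 0 < 1 - Complex.normSq b := by
    have h := Complex.sq_norm b
    nlinarith [norm_nonneg b]
  set A : ℝ := 1 - Complex.normSq a with hAdef
  set B : ℝ := 1 - Complex.normSq b with hBdef
  have hrho0 : 0 ≤ rhoDist a b := by
    unfold rhoDist
    have h0 : 0 ≤ Real.arsinh (‖a - b‖ /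
        Real.sqrt ((1 - ‖a‖ ^ 2) * (1 - ‖b‖ ^ 2))) :=
      Real.arsinh_nonneg_iff.mpr (by positivity)
    linarith
  refine Real.sSup_le ?_ hrho0
  rintro d ⟨u, v, hu, hv, ⟨tu, hue⟩, ⟨tv, hve⟩, hua, hvb, hdval⟩
  by_cases hab : b = a
  · rw [hab] at hue
    simp only [sub_self, mul_zero, add_zero] at hue
    rw [hue] at hu
    linarith
  set c : ℂ := b - a with hc
  have hcne : c ≠ 0 := sub_ne_zero.mpr hab
  set e : ℝ := ‖c‖ with he_def
  set e2 : ℝ := Complex.normSq c with he2_def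
  set R : ℝ := a.re * c.re + a.im * c.im with hR_def
  have he : 0 < e := norm_pos_iff.mpr hcne
  have he2 : e2 = e ^ 2 := by rw [he2_def, he_def, Complex.sq_norm]
  have he2pos : 0 < e2 := by rw [he2]; positivity
  have hexp : ∀ t : ℝ, Complex.normSq (a + (t : ℂ) * c) =
      Complex.normSq a + 2 * t * R + t ^ 2 * e2 := by
    intro t
    rw [hR_def, he2_def]
    simp only [Complex.normSq_apply, Complex.add_re, Complex.add_im, Complex.mul_re,
      Complex.mul_im, Complex.ofReal_re, Complex.ofReal_im]
    ring
  have hnorm1 : ∀ t : ℝ, ‖a + (t : ℂ) * c‖ = 1 → e2 * t ^ 2 + 2 * R * t = A := by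
    intro t ht
    have h1 : Complex.normSq (a + (t : ℂ) * c) = 1 := by
      rw [← Complex.sq_norm, ht]; norm_num
    have h2 := hexp t
    rw [h1] at h2
    rw [hAdef]; linarith
  have Eu : e2 * tu ^ 2 + 2 * R * tu = A := hnorm1 tu (by rw [← hue]; exact hu)
  have Ev : e2 * tv ^ 2 + 2 * R * tv = A := hnorm1 tv (by rw [← hve]; exact hv)
  have hBrel : B = A - 2 * R - e2 := by
    have h1 : Complex.normSq b = Complex.normSq (a + ((1 : ℝ) : ℂ) * c) := by
      congr 1
      rw [hc]; push_cast; ring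
    rw [hBdef, hAdef, h1, hexp 1]; ring
  -- distances
  have hdua : dist u a = |tu| * e := by
    rw [Complex.dist_eq, hue, add_sub_cancel_left, norm_mul, Complex.norm_real, Real.norm_eq_abs, he_def]
  have hdub : dist u b = |tu - 1| * e := by
    rw [Complex.dist_eq, hue]
    have h1 : a + (tu : ℂ) * c - b = ((tu - 1 : ℝ) : ℂ) * c := by rw [hc]; push_cast; ring
    rw [h1, norm_mul, Complex.norm_real, Real.norm_eq_abs, he_def]
  have hdav : dist a v = |tv| * e := by
    rw [Complex.dist_eq, hve]
    have h1 : a - (a + (tv : ℂ) * c) = ((-tv : ℝ) : ℂ) * c := by push_cast; ring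
    rw [h1, norm_mul, Complex.norm_real, Real.norm_eq_abs, abs_neg, he_def]
  have hdbv : dist b v = |tv - 1| * e := by
    rw [Complex.dist_eq, hve]
    have h1 : b - (a + (tv : ℂ) * c) = ((1 - tv : ℝ) : ℂ) * c := by rw [hc]; push_cast; ring
    rw [h1, norm_mul, Complex.norm_real, Real.norm_eq_abs, he_def, abs_sub_comm]
  -- sign information
  have habs_u : |tu| < |tu - 1| := by
    rw [hdua, hdub] at hua
    exact lt_of_mul_lt_mul_right hua he.le
  have habs_v : |tv - 1| < |tv| := by
    rw [dist_comm v b, dist_comm v a, hdbv, hdav] at hvb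
    exact lt_of_mul_lt_mul_right hvb he.le
  have htu : tu < 0 := by
    by_contra hcon
    push_neg at hcon
    have h1 : tu < 1 := by
      rcases le_or_gt 1 tu with h | h
      · rw [_root_.abs_of_nonneg hcon, _root_.abs_of_nonneg (by linarith : (0:ℝ) ≤ tu - 1)] at habs_u
        linarith
      · exact h
    have hid : (1 - tu) * A + tu * B + e2 * (tu * (1 - tu)) = 0 := by
      linear_combination tu * hBrel - Eu
    have p1 : 0 < (1 - tu) * A := mul_pos (sub_pos.mpr h1) hA
    have p2 : 0 ≤ tu * B := mul_nonneg hcon hB.le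
    have p3 : 0 ≤ e2 * (tu * (1 - tu)) :=
      mul_nonneg he2pos.le (mul_nonneg hcon (by linarith))
    linarith
  have htv2 : 1 / 2 < tv := by
    have h1 : |tv - 1| * |tv - 1| < |tv| * |tv| :=
      mul_self_lt_mul_self (abs_nonneg _) habs_v
    rw [abs_mul_abs_self, abs_mul_abs_self] at h1
    nlinarith [h1]
  have htv : 1 < tv := by
    by_contra hcon
    push_neg at hcon
    have hid : (1 - tv) * A + tv * B + e2 * (tv * (1 - tv)) = 0 := by
      linear_combination tv * hBrel - Ev
    have p1 : 0 ≤ (1 - tv) * A := mul_nonneg (by linarith) hA.le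
    have p2 : 0 < tv * B := mul_pos (by linarith) hB
    have p3 : 0 ≤ e2 * (tv * (1 - tv)) :=
      mul_nonneg he2pos.le (mul_nonneg (by linarith) (by linarith))
    linarith
  -- Vieta relations
  have hsum : e2 * (tu + tv) + 2 * R = 0 := by
    have hne : tu ≠ tv := by intro h; rw [h] at htu; linarith
    have hz : (tu - tv) * (e2 * (tu + tv) + 2 * R) = 0 := by linear_combination Eu - Ev
    rcases mul_eq_zero.mp hz with h | h
    · exact absurd h (sub_ne_zero.mpr hne)
    · exact h
  have hprodA : e2 * (tu * tv) = -A := by linear_combination tu * hsum - Eu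
  have hprodB : e2 * ((tu - 1) * (tv - 1)) = -B := by
    linear_combination hprodA - hsum + hBrel
  -- Cauchy-Schwarz
  have hR2 : R ^ 2 ≤ (1 - A) * e2 := by
    rw [hAdef, he2_def, hR_def, Complex.normSq_apply, Complex.normSq_apply]
    nlinarith [sq_nonneg (a.re * c.im - a.im * c.re)]
  -- key bounds
  have hQpos : 0 ≤ e2 * tv + R := by
    have h1 : 2 * (e2 * tv + R) = e2 * (tv - tu) := by linear_combination hsum
    have h2 : 0 < e2 * (tv - tu) := mul_pos he2pos (by linarith)
    linarith
  have hsqQ : (e2 * tv + R) ^ 2 = R ^ 2 + A * e2 := by linear_combination e2 * Ev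
  have hQkey : e2 * tv + R ≤ e := by
    have hsq2 : (e2 * tv + R) ^ 2 ≤ e ^ 2 := by linarith [hsqQ, hR2, he2]
    nlinarith [hsq2, hQpos, he]
  have hABpos : 0 < A * B := mul_pos hA hB
  have hWkey : A - R ≤ Real.sqrt (A * B + e ^ 2) := by
    have hid : A * B + e ^ 2 - (A - R) ^ 2 = (1 - A) * e2 - R ^ 2 := by
      linear_combination A * hBrel - he2
    have h1 : (A - R) ^ 2 ≤ A * B + e ^ 2 := by linarith [hR2]
    calc A - R ≤ |A - R| := le_abs_self _
      _ = Real.sqrt ((A - R) ^ 2) := (Real.sqrt_sq_eq_abs _).symm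
      _ ≤ _ := Real.sqrt_le_sqrt h1
  set W : ℝ := e + Real.sqrt (A * B + e ^ 2) with hW_def
  have hWpos : 0 < W := by rw [hW_def]; positivity
  have hNpos : 0 < (1 - tu) * tv := mul_pos (by linarith) (by linarith)
  have hDpos : 0 < (-tu) * (tv - 1) := mul_pos (by linarith) (by linarith)
  have hkey1 : e2 * ((1 - tu) * tv) ≤ W := by
    have h1 : e2 * ((1 - tu) * tv) = (e2 * tv + R) + (A - R) := by linear_combination -hprodA
    rw [h1, hW_def]
    exact add_le_add hQkey hWkey
  have hND : e2 ^ 2 * (((1 - tu) * tv) * ((-tu) * (tv - 1))) = A * B := by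
    linear_combination (e2 * ((tu - 1) * (tv - 1))) * hprodA - A * hprodB
  have hfrac : ((1 - tu) * tv) / ((-tu) * (tv - 1)) ≤ W ^ 2 / (A * B) := by
    rw [div_le_div_iff₀ hDpos hABpos]
    have h2 : (e2 * ((1 - tu) * tv)) ^ 2 ≤ W ^ 2 :=
      pow_le_pow_left₀ (by positivity) hkey1 2
    calc ((1 - tu) * tv) * (A * B)
        = (e2 * ((1 - tu) * tv)) ^ 2 * ((-tu) * (tv - 1)) := by
          linear_combination (-((1 - tu) * tv)) * hND
      _ ≤ W ^ 2 * ((-tu) * (tv - 1)) := mul_le_mul_of_nonneg_right h2 hDpos.le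
  -- rewrite rhoDist
  have hrho : rhoDist a b = Real.log (W ^ 2 / (A * B)) := by
    have hab1 : ‖a - b‖ = e := by
      rw [he_def, hc]; exact norm_sub_rev a b
    have ha2 : 1 - ‖a‖ ^ 2 = A := by rw [hAdef, Complex.sq_norm]
    have hb2 : 1 - ‖b‖ ^ 2 = B := by rw [hBdef, Complex.sq_norm]
    have hsABpos : 0 < Real.sqrt (A * B) := Real.sqrt_pos.mpr hABpos
    unfold rhoDist
    rw [hab1, ha2, hb2]
    unfold Real.arsinh
    have h1 : 1 + (e / Real.sqrt (A * B)) ^ 2 = (A * B + e ^ 2) / (A * B) := by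
      rw [div_pow, Real.sq_sqrt hABpos.le]
      field_simp
    rw [h1, Real.sqrt_div (by positivity) (A * B), ← add_div]
    rw [show (2 : ℝ) * Real.log ((e + Real.sqrt (A * B + e ^ 2)) / Real.sqrt (A * B)) =
        Real.log (((e + Real.sqrt (A * B + e ^ 2)) / Real.sqrt (A * B)) ^ 2) by
      rw [Real.log_pow]; push_cast; ring]
    congr 1
    rw [div_pow, Real.sq_sqrt hABpos.le, hW_def]
  -- rewrite the distance ratio
  have hdist_eq : dist u b * dist a v / (dist u a * dist b v) =
      ((1 - tu) * tv) / ((-tu) * (tv - 1)) := by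
    rw [hdub, hdav, hdua, hdbv,
      _root_.abs_of_neg (show tu - 1 < 0 by linarith), _root_.abs_of_pos (show (0:ℝ) < tv by linarith),
      _root_.abs_of_neg htu, _root_.abs_of_pos (show (0:ℝ) < tv - 1 by linarith)]
    have hden1 : (0:ℝ) < -tu * e * ((tv - 1) * e) :=
      mul_pos (mul_pos (by linarith) he) (mul_pos (by linarith) he)
    rw [div_eq_div_iff hden1.ne' hDpos.ne']
    ring
  rw [hdval, hdist_eq, hrho]
  exact Real.log_le_log (div_pos hNpos hDpos) hfrac

/-- For `z₀ ∈ (0,1)` and `s ∈ (0, 1-z₀)`, the Euclidean disk `B²(z₀,s)` is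
contained in the Hilbert disk `B_h(z₀, ρ(z₀, z₀+s))`. -/
theorem euclidean_ball_subset_hilbert_ball (z₀ s : ℝ)
    (h₁ : 0 < z₀) (h₂ : z₀ < 1) (hs₁ : 0 < s) (hs₂ : s < 1 - z₀) :
    Metric.ball (z₀ : ℂ) s ⊆
      hilbertBall (z₀ : ℂ) (rhoDist (z₀ : ℂ) ((z₀ + s : ℝ) : ℂ)) := by
  intro z hz
  have hz' : ‖z - (z₀ : ℂ)‖ < s := by
    rw [Metric.mem_ball, Complex.dist_eq] at hz; exact hz
  have hz0abs : ‖((z₀ : ℝ) : ℂ)‖ = z₀ := by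
    rw [Complex.norm_real, Real.norm_eq_abs, _root_.abs_of_pos h₁]
  have hzabs : ‖z‖ < 1 := by
    calc ‖z‖ = ‖(z₀ : ℂ) + (z - (z₀ : ℂ))‖ := by congr 1; ring
      _ ≤ ‖(z₀ : ℂ)‖ + ‖z - (z₀ : ℂ)‖ := norm_add_le _ _
      _ < z₀ + s := by rw [hz0abs]; linarith
      _ < 1 := by linarith
  refine ⟨hzabs, ?_⟩
  have hle := hilbert_le_rho (z₀ : ℂ) z (by rw [hz0abs]; linarith) hzabs
  refine lt_of_le_of_lt hle ?_
  set d : ℝ := ‖(z₀ : ℂ) - z‖ with hd_def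
  have hcomm : ‖z - (z₀ : ℂ)‖ = d := by
    rw [hd_def]; exact norm_sub_rev _ _
  have hd : d < s := by rw [← hcomm]; exact hz'
  have hd0 : 0 ≤ d := norm_nonneg _
  have hzd : ‖z‖ ≤ z₀ + d := by
    calc ‖z‖ = ‖(z₀ : ℂ) + (z - (z₀ : ℂ))‖ := by congr 1; ring
      _ ≤ ‖(z₀ : ℂ)‖ + ‖z - (z₀ : ℂ)‖ := norm_add_le _ _
      _ = z₀ + d := by rw [hz0abs, hcomm]
  have h2s : ‖(z₀ : ℂ) - ((z₀ + s : ℝ) : ℂ)‖ = s := by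
    rw [show (z₀ : ℂ) - ((z₀ + s : ℝ) : ℂ) = ((-s : ℝ) : ℂ) by push_cast; ring,
      Complex.norm_real, Real.norm_eq_abs, abs_neg, _root_.abs_of_pos hs₁]
  have h3 : ‖(((z₀ + s : ℝ)) : ℂ)‖ = z₀ + s := by
    rw [Complex.norm_real, Real.norm_eq_abs, _root_.abs_of_pos (by linarith)]
  unfold rhoDist
  rw [h2s, h3, hz0abs]
  have hA : 0 < 1 - z₀ ^ 2 := by nlinarith
  have hBz : 0 < 1 - ‖z‖ ^ 2 := by nlinarith [hzabs, norm_nonneg z]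
  have hBs : 0 < 1 - (z₀ + s) ^ 2 := by nlinarith
  have hBzd : 1 - (z₀ + d) ^ 2 ≤ 1 - ‖z‖ ^ 2 := by
    nlinarith [hzd, norm_nonneg z]
  have hfrac : d / Real.sqrt ((1 - z₀ ^ 2) * (1 - ‖z‖ ^ 2)) <
      s / Real.sqrt ((1 - z₀ ^ 2) * (1 - (z₀ + s) ^ 2)) := by
    rw [div_lt_div_iff₀ (Real.sqrt_pos.mpr (mul_pos hA hBz))
      (Real.sqrt_pos.mpr (mul_pos hA hBs))]
    have fac : 0 < (s - d) * ((s + d) * (1 - z₀ ^ 2) - 2 * z₀ * s * d) := by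
      apply mul_pos (by linarith)
      nlinarith [mul_nonneg (mul_nonneg h₁.le hd0) (show (0:ℝ) ≤ 1 - z₀ - s by linarith),
        mul_nonneg hd0 (sq_nonneg (1 - z₀)), mul_pos hs₁ hA]
    have k1 : d ^ 2 * (1 - (z₀ + s) ^ 2) < s ^ 2 * (1 - (z₀ + d) ^ 2) := by nlinarith [fac]
    have k2 : s ^ 2 * (1 - (z₀ + d) ^ 2) ≤ s ^ 2 * (1 - ‖z‖ ^ 2) :=
      mul_le_mul_of_nonneg_left hBzd (sq_nonneg s)
    have k3 := mul_lt_mul_of_pos_left (k1.trans_le k2) hA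
    have e1 : d * Real.sqrt ((1 - z₀ ^ 2) * (1 - (z₀ + s) ^ 2)) =
        Real.sqrt (d ^ 2 * ((1 - z₀ ^ 2) * (1 - (z₀ + s) ^ 2))) := by
      rw [Real.sqrt_mul (sq_nonneg d), Real.sqrt_sq hd0]
    have e2 : s * Real.sqrt ((1 - z₀ ^ 2) * (1 - ‖z‖ ^ 2)) =
        Real.sqrt (s ^ 2 * ((1 - z₀ ^ 2) * (1 - ‖z‖ ^ 2))) := by
      rw [Real.sqrt_mul (sq_nonneg s), Real.sqrt_sq hs₁.le]
    rw [e1, e2]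
    exact Real.sqrt_lt_sqrt (by positivity) (by nlinarith [k3])
  have := Real.arsinh_lt_arsinh.mpr hfrac
  linarith
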